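/- Let k ≥ 3 and let π ∈ 𝕊_{k−1} be a permutation with S(π) ≠ ∅, say |S(π)| = m−1, and let (S₁,…,S_k) be the maximal sorted family associated with π. Then #{i ∈ {1,…,k} : exactly one index l ∈ {1,…,k} satisfies i ∈ S_l} + #{i ∈ {1,…,k} : exactly one index l ∈ {1,…,k} satisfies i ∉ S_l} = ear(π). (Geometrically: the simplex σ_π = conv{e_{S₁},…,e_{S_k}} in the alcoved triangulation of the hypersimplex Δ_{k,m} is adjacent to exactly ear(π) facets of Δ_{k,m}.) -/

import Mathlib

open Finset

attribute [local instance] Classical.propDecidable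

noncomputable section

/-- `π` is a permutation of `{1,…,k-1}` given in one-line notation
(`π p` is the entry at position `p`), normalized to `0` outside `[1,k-1]`. -/
def OneLine (k : ℕ) (π : ℕ → ℕ) : Prop :=
  Set.BijOn π (Set.Icc 1 (k - 1)) (Set.Icc 1 (k - 1)) ∧
    ∀ p, p ∉ Set.Icc 1 (k - 1) → π p = 0

/-- The set `S(π)` of adjacent inversions of `π`:
those `i ∈ [1,k-2]` such that `i+1` appears before `i` in `π`. -/
def adjInvF (k : ℕ) (π : ℕ → ℕ) : Finset ℕ :=
  (Finset.Icc 1 (k - 2)).filter fun i =>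
    ∃ p ∈ Finset.Icc 1 (k - 1), ∃ r ∈ Finset.Icc 1 (k - 1),
      p < r ∧ π p = i + 1 ∧ π r = i

/-- `W^π_{k,q}`: weakly increasing `(k-1)`-tuples with entries in `[0,q-1]`
that are strictly increasing at every adjacent inversion of `π`
(vectors are functions `ℕ → ℕ` supported on `[1,k-1]`). -/
def W (k q : ℕ) (π : ℕ → ℕ) : Set (ℕ → ℕ) :=
  {v | (∀ i, i ∉ Finset.Icc 1 (k - 1) → v i = 0) ∧
       (∀ i ∈ Finset.Icc 1 (k - 1), v i ≤ q - 1) ∧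
       (∀ i, 1 ≤ i → i + 1 ≤ k - 1 → v i ≤ v (i + 1)) ∧
       (∀ i ∈ adjInvF k π, v i < v (i + 1))}

/-- `x + e_{π_a} + e_{π_{a+1}} + ⋯ + e_{π_{b-1}}`. -/
def shift (π : ℕ → ℕ) (a b : ℕ) (x : ℕ → ℕ) : ℕ → ℕ :=
  fun i => x i + if i ∈ (Finset.Icc a (b - 1)).image π then 1 else 0

/-- Adjacency in the graph `G^π_{k,q}`: one vertex is obtained from the other
by adding `e_{π_a} + ⋯ + e_{π_{b-1}}` for some `1 ≤ a < b ≤ k`. -/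
def AdjRel (k : ℕ) (π : ℕ → ℕ) (x y : ℕ → ℕ) : Prop :=
  ∃ a b, 1 ≤ a ∧ a < b ∧ b ≤ k ∧ (y = shift π a b x ∨ x = shift π a b y)

/-- The number of maximal blocks of consecutive integers of a finite set `T ⊆ ℕ`. -/
def numBlocks (T : Finset ℕ) : ℕ := (T.filter fun t => t + 1 ∉ T).card

/-- `cs_i(π)`: the number of pairs `1 ≤ a < b ≤ k` such that
`T_{a,b} = {π_a,…,π_{b-1}}` decomposes into exactly `i` maximal blocks
of consecutive integers. -/
def cs (k : ℕ) (π : ℕ → ℕ) (i : ℕ) : ℕ :=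
  ((Finset.Icc 1 k ×ˢ Finset.Icc 1 k).filter fun p =>
    p.1 < p.2 ∧ numBlocks ((Finset.Icc p.1 (p.2 - 1)).image π) = i).card

/-- For `i < j`, `{i,j}` is an edge of `G_π` iff `{i,i+1,…,j-1}` occurs as
a set of consecutive entries of `π`. -/
def GpiEdge (k : ℕ) (π : ℕ → ℕ) (i j : ℕ) : Prop :=
  ∃ a, 1 ≤ a ∧ a + (j - i) ≤ k ∧
    (Finset.Icc a (a + (j - i) - 1)).image π = Finset.Icc i (j - 1)

/-- Unordered adjacency in `G_π`. -/
def GpiAdjU (k : ℕ) (π : ℕ → ℕ) (i j : ℕ) : Prop :=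
  (i < j ∧ GpiEdge k π i j) ∨ (j < i ∧ GpiEdge k π j i)

/-- The position of the value `v` in the one-line notation of `π`. -/
def posOf (k : ℕ) (π : ℕ → ℕ) (v : ℕ) : ℕ :=
  if h : ((Finset.Icc 1 (k - 1)).filter fun t => π t = v).Nonempty then
    ((Finset.Icc 1 (k - 1)).filter fun t => π t = v).min' h
  else 0

/-- The rotation `r` on one-line permutations: if `π = π₁…π_{t-1}(k-1)π_{t+1}…π_{k-1}`,
then `r(π) = (π_{t+1}+1)…(π_{k-1}+1) 1 (π₁+1)…(π_{t-1}+1)`. -/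
def rot (k : ℕ) (π : ℕ → ℕ) : ℕ → ℕ := fun p =>
  if p ∉ Finset.Icc 1 (k - 1) then 0
  else if p < k - posOf k π (k - 1) then π (posOf k π (k - 1) + p) + 1
  else if p = k - posOf k π (k - 1) then 1
  else π (p - (k - posOf k π (k - 1))) + 1

/-- The reflection `s` on one-line permutations: if `π = π₁…π_{i-1} 1 π_{i+1}…π_{k-1}`,
then `s(π) = (k+1-π_{i-1})…(k+1-π₁) 1 (k+1-π_{k-1})…(k+1-π_{i+1})`. -/
def srefl (k : ℕ) (π : ℕ → ℕ) : ℕ → ℕ := fun p =>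
  if p ∉ Finset.Icc 1 (k - 1) then 0
  else if p < posOf k π 1 then k + 1 - π (posOf k π 1 - p)
  else if p = posOf k π 1 then 1
  else k + 1 - π (k + posOf k π 1 - p)

/-- The rotation `ρ` of the vertex set `{1,…,k}`. -/
def rotV (k i : ℕ) : ℕ := if i < k then i + 1 else 1

/-- The reflection `σ` of the vertex set `{1,…,k}`. -/
def sreflV (k i : ℕ) : ℕ := if i = 1 then 1 else k + 2 - i

/-- The maximal sorted family `(S₁,…,S_k)` associated with `σ`, `0`-indexed:
`sortedFam k σ (i-1) = S_i`. -/
def sortedFam (k : ℕ) (σ : ℕ → ℕ) : ℕ → Finset ℕ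
  | 0 => insert 1 ((adjInvF k σ).image (· + 1))
  | j + 1 => insert (σ (j + 1) + 1) ((sortedFam k σ j).erase (σ (j + 1)))

/-- `ear(π)`. -/
def ear (k : ℕ) (π : ℕ → ℕ) : ℕ :=
  ((Finset.Icc 1 (k - 2)).filter fun i => π (i + 1) = π i + 1 ∨ π i = π (i + 1) + 1).card
    + (({1, k - 1} : Finset ℕ) ∩ ({π 1, π (k - 1)} : Finset ℕ)).card

/-- `ε_i(π) = 1` if `i-1 ∈ S(π)` and `0` otherwise. -/
def eps (k : ℕ) (π : ℕ → ℕ) (i : ℕ) : ℕ := if i - 1 ∈ adjInvF k π then 1 else 0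

/-- Extension of a vector with the conventions `x_k = q-1` (`x₀ = 0` holds by
the normalization of vectors in `W^π_{k,q}`). -/
def xext (k q : ℕ) (x : ℕ → ℕ) (i : ℕ) : ℕ := if i = k then q - 1 else x i

/-- The label list `L^π(x) = {i ∈ [1,k] : x_{i-1} < x_i - ε_i(π)}`. -/
def labels (k q : ℕ) (π : ℕ → ℕ) (x : ℕ → ℕ) : Finset ℕ :=
  (Finset.Icc 1 k).filter fun i => xext k q x (i - 1) + eps k π i < xext k q x i

/-- A Sperner labeling of `G^π_{k,q}`. -/
def IsSperner (k q : ℕ) (π : ℕ → ℕ) (f : (ℕ → ℕ) → ℕ) : Prop :=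
  (∀ x ∈ W k q π, f x = 0 ∨ f x ∈ labels k q π x) ∧
  (∀ x ∈ W k q π, ∀ y ∈ W k q π, AdjRel k π x y → f x = f y ∨ f x = 0 ∨ f y = 0)

/-- The entry `w` appears between the entries `u` and `v` in `π`. -/
def Between (k : ℕ) (π : ℕ → ℕ) (u v w : ℕ) : Prop :=
  (posOf k π u < posOf k π w ∧ posOf k π w < posOf k π v) ∨
  (posOf k π v < posOf k π w ∧ posOf k π w < posOf k π u)

/-- A good set of colors for `π`. -/
def GoodSet (k : ℕ) (π : ℕ → ℕ) (C : Finset ℕ) : Prop :=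
  C ⊆ Finset.Icc 1 k ∧
  (∀ i ∈ C, ∀ j ∈ C, i ≠ j → ¬ GpiAdjU k π i j) ∧
  (∀ a ∈ C, ∀ b ∈ C, 1 < a → a < b → b < k →
      ((Between k π (a - 1) b a ∨ Between k π (a - 1) b (b - 1)) ∧
       (Between k π (b - 1) a (a - 1) ∨ Between k π (b - 1) a b))) ∧
  (1 ∈ C → ∀ b ∈ C, b ≠ 1 → Between k π 1 (b - 1) b) ∧
  (k ∈ C → ∀ b ∈ C, b ≠ k → Between k π b (k - 1) (b - 1))

/-- `x_a - x_{a-1} - ε_a(π)`, the `a`-th coordinate of the distance map `D`. -/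
def dval (k q : ℕ) (π : ℕ → ℕ) (x : ℕ → ℕ) (a : ℕ) : ℕ :=
  xext k q x a - xext k q x (a - 1) - eps k π a

/-- The distance coloring determined by a set of colors `C`:
`x` gets color `a ∈ C` if `dval x a` is the unique maximum of `dval x` on `C`,
and `0` otherwise. -/
def dcol (k q : ℕ) (π : ℕ → ℕ) (C : Finset ℕ) (x : ℕ → ℕ) : ℕ :=
  if h : ∃ a ∈ C, ∀ b ∈ C, b ≠ a → dval k q π x b < dval k q π x a then h.choose else 0

namespace Stmt7Aux

variable {k : ℕ} {π : ℕ → ℕ}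

lemma pi_mem (hπ : OneLine k π) {t : ℕ} (h1 : 1 ≤ t) (h2 : t ≤ k - 1) :
    1 ≤ π t ∧ π t ≤ k - 1 := by
  have := hπ.1.mapsTo (show t ∈ Set.Icc 1 (k - 1) from Set.mem_Icc.2 ⟨h1, h2⟩)
  exact Set.mem_Icc.1 this

lemma posOf_spec (hπ : OneLine k π) {v : ℕ} (h1 : 1 ≤ v) (h2 : v ≤ k - 1) :
    1 ≤ posOf k π v ∧ posOf k π v ≤ k - 1 ∧ π (posOf k π v) = v := by
  obtain ⟨t, ht, htv⟩ := hπ.1.surjOn (Set.mem_Icc.2 ⟨h1, h2⟩)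
  rw [Set.mem_Icc] at ht
  have hne : ((Finset.Icc 1 (k - 1)).filter fun s => π s = v).Nonempty :=
    ⟨t, Finset.mem_filter.2 ⟨Finset.mem_Icc.2 ⟨ht.1, ht.2⟩, htv⟩⟩
  have hmem := Finset.min'_mem _ hne
  rw [Finset.mem_filter, Finset.mem_Icc] at hmem
  rw [posOf, dif_pos hne]
  exact ⟨hmem.1.1, hmem.1.2, hmem.2⟩

lemma posOf_pi (hπ : OneLine k π) {t : ℕ} (h1 : 1 ≤ t) (h2 : t ≤ k - 1) :
    posOf k π (π t) = t := by
  obtain ⟨ha, hb⟩ := pi_mem hπ h1 h2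
  obtain ⟨c1, c2, c3⟩ := posOf_spec hπ ha hb
  exact hπ.1.injOn (Set.mem_Icc.2 ⟨c1, c2⟩) (Set.mem_Icc.2 ⟨h1, h2⟩) c3

lemma pos_eq_iff (hπ : OneLine k π) {v t : ℕ} (hv1 : 1 ≤ v) (hv2 : v ≤ k - 1)
    (ht1 : 1 ≤ t) (ht2 : t ≤ k - 1) : π t = v ↔ posOf k π v = t :=
  ⟨fun h => by rw [← h, posOf_pi hπ ht1 ht2],
   fun h => by rw [← h, (posOf_spec hπ hv1 hv2).2.2]⟩

lemma mem_adjInv_iff (hk : 3 ≤ k) (hπ : OneLine k π) {i : ℕ} (h1 : 1 ≤ i) (h2 : i ≤ k - 2) :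
    i ∈ adjInvF k π ↔ posOf k π (i + 1) < posOf k π i := by
  obtain ⟨a1, a2, a3⟩ := posOf_spec hπ h1 (by omega : i ≤ k - 1)
  obtain ⟨b1, b2, b3⟩ := posOf_spec hπ (by omega : 1 ≤ i + 1) (by omega : i + 1 ≤ k - 1)
  constructor
  · intro h
    simp only [adjInvF, Finset.mem_filter, Finset.mem_Icc] at h
    obtain ⟨-, p, hp, r, hr, hpr, hp2, hr2⟩ := h
    have e1 := posOf_pi hπ hp.1 hp.2
    rw [hp2] at e1
    have e2 := posOf_pi hπ hr.1 hr.2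
    rw [hr2] at e2
    omega
  · intro h
    simp only [adjInvF, Finset.mem_filter, Finset.mem_Icc]
    exact ⟨⟨h1, h2⟩, posOf k π (i + 1), ⟨b1, b2⟩,
      posOf k π i, ⟨a1, a2⟩, h, b3, a3⟩

/-- Membership condition for `i ∈ S_l` (with `l = j+1`). -/
def memC (k : ℕ) (π : ℕ → ℕ) (i l : ℕ) : Prop :=
  (i = 1 ∧ l ≤ posOf k π 1) ∨
  (i = k ∧ posOf k π (k - 1) < l) ∨
  (2 ≤ i ∧ i ≤ k - 1 ∧
    ((posOf k π i < posOf k π (i - 1) ∧ (l ≤ posOf k π i ∨ posOf k π (i - 1) < l)) ∨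
     (posOf k π (i - 1) < posOf k π i ∧ posOf k π (i - 1) < l ∧ l ≤ posOf k π i)))

lemma mem_sortedFam_iff (hk : 3 ≤ k) (hπ : OneLine k π) :
    ∀ j, j ≤ k - 1 → ∀ i, (i ∈ sortedFam k π j ↔ memC k π i (j + 1)) := by
  intro j
  induction j with
  | zero =>
    intro _ i
    rw [show sortedFam k π 0 = insert 1 ((adjInvF k π).image (· + 1)) from rfl]
    simp only [Finset.mem_insert, Finset.mem_image]
    obtain ⟨q1, q2, -⟩ := posOf_spec hπ (le_refl 1) (by omega)
    constructor
    · rintro (rfl | ⟨a, ha, rfl⟩)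
      · exact Or.inl ⟨rfl, q1⟩
      · have hb := ha
        simp only [adjInvF, Finset.mem_filter, Finset.mem_Icc] at hb
        rw [mem_adjInv_iff hk hπ hb.1.1 hb.1.2] at ha
        obtain ⟨c1, c2, -⟩ := posOf_spec hπ (by omega : 1 ≤ a + 1) (by omega : a + 1 ≤ k - 1)
        right; right
        refine ⟨by omega, by omega, Or.inl ⟨?_, Or.inl c1⟩⟩
        simpa using ha
    · rintro (⟨rfl, -⟩ | ⟨hik, hlt⟩ | ⟨h2, h3, hcase⟩)
      · exact Or.inl rfl
      · obtain ⟨c1, -, -⟩ := posOf_spec hπ (by omega : 1 ≤ k - 1) (le_refl _)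
        exact absurd hlt (by omega)
      · right
        obtain ⟨c1, c2, -⟩ := posOf_spec hπ (by omega : 1 ≤ i - 1) (by omega : i - 1 ≤ k - 1)
        refine ⟨i - 1, ?_, by omega⟩
        rw [mem_adjInv_iff hk hπ (by omega) (by omega)]
        rw [show i - 1 + 1 = i by omega]
        rcases hcase with ⟨h, _⟩ | ⟨_, hlt, _⟩
        · exact h
        · omega
  | succ j ih =>
    intro hj i
    have hj' : j ≤ k - 1 := by omega
    have hc := pi_mem hπ (show 1 ≤ j + 1 by omega) hj
    have hpc : posOf k π (π (j + 1)) = j + 1 := posOf_pi hπ (by omega) hj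
    rw [show sortedFam k π (j + 1)
        = insert (π (j + 1) + 1) ((sortedFam k π j).erase (π (j + 1))) from rfl]
    simp only [Finset.mem_insert, Finset.mem_erase]
    rw [ih hj' i]
    by_cases hi1 : i = 1
    · subst hi1
      obtain ⟨q1, q2, q3⟩ := posOf_spec hπ (le_refl 1) (by omega)
      have e : π (j + 1) = 1 ↔ posOf k π 1 = j + 1 :=
        pos_eq_iff hπ (by omega) (by omega) (by omega) hj
      simp only [memC, true_and, and_true, false_and, and_false, or_false, false_or]
      omega
    · by_cases hik : i = k
      · obtain ⟨q1, q2, q3⟩ := posOf_spec hπ (show 1 ≤ k - 1 by omega) (le_refl _)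
        have e : π (j + 1) = k - 1 ↔ posOf k π (k - 1) = j + 1 :=
          pos_eq_iff hπ (by omega) (by omega) (by omega) hj
        simp only [memC, true_and, and_true, false_and, and_false, or_false, false_or]
        omega
      · by_cases himid : 2 ≤ i ∧ i ≤ k - 1
        · obtain ⟨hi2, hi3⟩ := himid
          obtain ⟨a1, a2, a3⟩ := posOf_spec hπ (by omega : 1 ≤ i) (by omega)
          obtain ⟨b1, b2, b3⟩ := posOf_spec hπ (by omega : 1 ≤ i - 1) (by omega : i - 1 ≤ k - 1)
          have hne : posOf k π i ≠ posOf k π (i - 1) := by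
            intro h
            rw [h, b3] at a3
            omega
          have e1 : π (j + 1) = i ↔ posOf k π i = j + 1 :=
            pos_eq_iff hπ (by omega) (by omega) (by omega) hj
          have e2 : π (j + 1) = i - 1 ↔ posOf k π (i - 1) = j + 1 :=
            pos_eq_iff hπ (by omega) (by omega) (by omega) hj
          simp only [memC, true_and, and_true, false_and, and_false, or_false, false_or]
          omega
        · simp only [memC, true_and, and_true, false_and, and_false, or_false, false_or]
          omega

lemma filter_eq_memC (hk : 3 ≤ k) (hπ : OneLine k π) (i : ℕ) :
    (Finset.Icc 1 k).filter (fun l => i ∈ sortedFam k π (l - 1)) =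
    (Finset.Icc 1 k).filter (fun l => memC k π i l) := by
  apply Finset.filter_congr
  intro l hl
  rw [Finset.mem_Icc] at hl
  rw [mem_sortedFam_iff hk hπ (l - 1) (by omega) i, show l - 1 + 1 = l by omega]

lemma N1 (hk : 3 ≤ k) (hπ : OneLine k π) :
    ((Finset.Icc 1 k).filter fun l => (1 : ℕ) ∈ sortedFam k π (l - 1)).card = posOf k π 1 := by
  rw [filter_eq_memC hk hπ]
  obtain ⟨q1, q2, -⟩ := posOf_spec hπ (le_refl 1) (by omega)
  have h : (Finset.Icc 1 k).filter (fun l => memC k π 1 l) = Finset.Icc 1 (posOf k π 1) := by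
    ext l
    simp only [Finset.mem_filter, Finset.mem_Icc, memC, true_and, and_true, false_and, and_false, or_false, false_or]
    omega
  rw [h, Nat.card_Icc]
  omega

lemma Nk (hk : 3 ≤ k) (hπ : OneLine k π) :
    ((Finset.Icc 1 k).filter fun l => k ∈ sortedFam k π (l - 1)).card
      = k - posOf k π (k - 1) := by
  rw [filter_eq_memC hk hπ]
  obtain ⟨q1, q2, -⟩ := posOf_spec hπ (show 1 ≤ k - 1 by omega) (le_refl _)
  have h : (Finset.Icc 1 k).filter (fun l => memC k π k l)
      = Finset.Icc (posOf k π (k - 1) + 1) k := by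
    ext l
    simp only [Finset.mem_filter, Finset.mem_Icc, memC, true_and, and_true, false_and, and_false, or_false, false_or]
    omega
  rw [h, Nat.card_Icc]
  omega

lemma Nmid (hk : 3 ≤ k) (hπ : OneLine k π) {i : ℕ} (h2 : 2 ≤ i) (h3 : i ≤ k - 1) :
    ((Finset.Icc 1 k).filter fun l => i ∈ sortedFam k π (l - 1)).card
      = if posOf k π i < posOf k π (i - 1)
          then posOf k π i + (k - posOf k π (i - 1))
          else posOf k π i - posOf k π (i - 1) := by
  rw [filter_eq_memC hk hπ]
  obtain ⟨a1, a2, a3⟩ := posOf_spec hπ (by omega : 1 ≤ i) (by omega)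
  obtain ⟨b1, b2, b3⟩ := posOf_spec hπ (by omega : 1 ≤ i - 1) (by omega : i - 1 ≤ k - 1)
  have hne : posOf k π i ≠ posOf k π (i - 1) := by
    intro h
    rw [h, b3] at a3
    omega
  by_cases h : posOf k π i < posOf k π (i - 1)
  · rw [if_pos h]
    have he : (Finset.Icc 1 k).filter (fun l => memC k π i l)
        = Finset.Icc 1 (posOf k π i) ∪ Finset.Icc (posOf k π (i - 1) + 1) k := by
      ext l
      rw [Finset.mem_filter]
      simp only [Finset.mem_filter, Finset.mem_union, Finset.mem_Icc, memC, true_and, and_true, false_and, and_false, or_false, false_or]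
      omega
    rw [he, Finset.card_union_of_disjoint, Nat.card_Icc, Nat.card_Icc]
    · omega
    · rw [Finset.disjoint_left]
      intro x hx hx2
      rw [Finset.mem_Icc] at hx hx2
      omega
  · rw [if_neg h]
    have he : (Finset.Icc 1 k).filter (fun l => memC k π i l)
        = Finset.Icc (posOf k π (i - 1) + 1) (posOf k π i) := by
      ext l
      rw [Finset.mem_filter]
      simp only [Finset.mem_filter, Finset.mem_Icc, memC, true_and, and_true, false_and, and_false, or_false, false_or]
      omega
    rw [he, Nat.card_Icc]
    omega

lemma Ncompl (i : ℕ) :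
    ((Finset.Icc 1 k).filter fun l => i ∉ sortedFam k π (l - 1)).card
      = k - ((Finset.Icc 1 k).filter fun l => i ∈ sortedFam k π (l - 1)).card := by
  have he : ((Finset.Icc 1 k).filter fun l => i ∉ sortedFam k π (l - 1))
      = Finset.Icc 1 k \ ((Finset.Icc 1 k).filter fun l => i ∈ sortedFam k π (l - 1)) := by
    ext x
    simp only [Finset.mem_filter, Finset.mem_sdiff]
    tauto
  rw [he, Finset.card_sdiff_of_subset (Finset.filter_subset _ _), Nat.card_Icc]
  omega

lemma val_eq (hπ : OneLine k π) {u v : ℕ} (hu1 : 1 ≤ u) (hu2 : u ≤ k - 1)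
    (hv1 : 1 ≤ v) (hv2 : v ≤ k - 1) (h : posOf k π u = posOf k π v) : u = v := by
  rw [← (posOf_spec hπ hu1 hu2).2.2, h, (posOf_spec hπ hv1 hv2).2.2]

lemma sum_split (hk : 3 ≤ k) (f : ℕ → ℕ) :
    ∑ i ∈ Finset.Icc 1 k, f i = f 1 + f k + ∑ i ∈ Finset.Icc 2 (k - 1), f i := by
  have h : Finset.Icc 1 k = insert 1 (insert k (Finset.Icc 2 (k - 1))) := by
    ext x
    simp only [Finset.mem_Icc, Finset.mem_insert]
    omega
  rw [h, Finset.sum_insert (by simp only [Finset.mem_insert, Finset.mem_Icc]; omega),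
    Finset.sum_insert (by simp only [Finset.mem_Icc]; omega)]
  omega

lemma card_mid (hk : 3 ≤ k) (hπ : OneLine k π) :
    ((Finset.Icc 2 (k - 1)).filter fun i =>
        posOf k π i = posOf k π (i - 1) + 1 ∨ posOf k π (i - 1) = posOf k π i + 1).card
      = ((Finset.Icc 1 (k - 2)).filter fun i =>
          π (i + 1) = π i + 1 ∨ π i = π (i + 1) + 1).card := by
  apply Finset.card_bij (fun i _ => min (posOf k π i) (posOf k π (i - 1)))
  · intro a ha
    simp only [Finset.mem_filter, Finset.mem_Icc] at ha ⊢
    obtain ⟨⟨ha2, ha3⟩, hcond⟩ := ha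
    obtain ⟨a1, a2, a3⟩ := posOf_spec hπ (by omega : 1 ≤ a) (by omega)
    obtain ⟨b1, b2, b3⟩ := posOf_spec hπ (by omega : 1 ≤ a - 1) (by omega : a - 1 ≤ k - 1)
    rcases hcond with h | h
    · have hmin : min (posOf k π a) (posOf k π (a - 1)) = posOf k π (a - 1) := by omega
      refine ⟨⟨by omega, by omega⟩, Or.inl ?_⟩
      rw [hmin, ← h, a3, b3]
      omega
    · have hmin : min (posOf k π a) (posOf k π (a - 1)) = posOf k π a := by omega
      refine ⟨⟨by omega, by omega⟩, Or.inr ?_⟩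
      rw [hmin, ← h, a3, b3]
      omega
  · intro a ha b hb hab
    simp only [Finset.mem_filter, Finset.mem_Icc] at ha hb
    obtain ⟨⟨ha2, ha3⟩, hca⟩ := ha
    obtain ⟨⟨hb2, hb3⟩, hcb⟩ := hb
    obtain ⟨a1, a2, a3⟩ := posOf_spec hπ (by omega : 1 ≤ a) (by omega)
    obtain ⟨b1, b2, b3⟩ := posOf_spec hπ (by omega : 1 ≤ a - 1) (by omega : a - 1 ≤ k - 1)
    obtain ⟨c1, c2, c3⟩ := posOf_spec hπ (by omega : 1 ≤ b) (by omega)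
    obtain ⟨d1, d2, d3⟩ := posOf_spec hπ (by omega : 1 ≤ b - 1) (by omega : b - 1 ≤ k - 1)
    rcases hca with h1 | h1 <;> rcases hcb with h2 | h2
    · have e := val_eq hπ (by omega : 1 ≤ a - 1) (by omega) (by omega : 1 ≤ b - 1) (by omega)
        (by omega : posOf k π (a - 1) = posOf k π (b - 1))
      omega
    · have e := val_eq hπ (by omega : 1 ≤ a - 1) (by omega) (by omega : 1 ≤ b) (by omega)
        (by omega : posOf k π (a - 1) = posOf k π b)
      have e' := val_eq hπ (by omega : 1 ≤ a) (by omega) (by omega : 1 ≤ b - 1) (by omega)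
        (by omega : posOf k π a = posOf k π (b - 1))
      omega
    · have e := val_eq hπ (by omega : 1 ≤ a) (by omega) (by omega : 1 ≤ b - 1) (by omega)
        (by omega : posOf k π a = posOf k π (b - 1))
      have e' := val_eq hπ (by omega : 1 ≤ a - 1) (by omega) (by omega : 1 ≤ b) (by omega)
        (by omega : posOf k π (a - 1) = posOf k π b)
      omega
    · have e := val_eq hπ (by omega : 1 ≤ a) (by omega) (by omega : 1 ≤ b) (by omega)
        (by omega : posOf k π a = posOf k π b)
      omega
  · intro t ht
    simp only [Finset.mem_filter, Finset.mem_Icc] at ht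
    obtain ⟨⟨ht1, ht2⟩, hcond⟩ := ht
    have hpt := pi_mem hπ (by omega : 1 ≤ t) (by omega : t ≤ k - 1)
    have hpt1 := pi_mem hπ (by omega : 1 ≤ t + 1) (by omega : t + 1 ≤ k - 1)
    have e1 : posOf k π (π t) = t := posOf_pi hπ (by omega) (by omega)
    have e2 : posOf k π (π (t + 1)) = t + 1 := posOf_pi hπ (by omega) (by omega)
    rcases hcond with h | h
    · refine ⟨π (t + 1), Finset.mem_filter.2 ⟨Finset.mem_Icc.2 ⟨by omega, by omega⟩,
        Or.inl ?_⟩, ?_⟩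
      · rw [show π (t + 1) - 1 = π t by omega, e1, e2]
      · rw [show π (t + 1) - 1 = π t by omega, e1, e2]
        omega
    · refine ⟨π t, Finset.mem_filter.2 ⟨Finset.mem_Icc.2 ⟨by omega, by omega⟩,
        Or.inr ?_⟩, ?_⟩
      · rw [show π t - 1 = π (t + 1) by omega, e1, e2]
      · rw [show π t - 1 = π (t + 1) by omega, e1, e2]
        omega

set_option maxHeartbeats 1600000 in
lemma card_boundary (hk : 3 ≤ k) (hπ : OneLine k π) :
    ((if ((Finset.Icc 1 k).filter fun l => (1 : ℕ) ∈ sortedFam k π (l - 1)).card = 1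
        then 1 else 0)
      + (if ((Finset.Icc 1 k).filter fun l => (1 : ℕ) ∉ sortedFam k π (l - 1)).card = 1
          then 1 else 0))
    + ((if ((Finset.Icc 1 k).filter fun l => k ∈ sortedFam k π (l - 1)).card = 1
        then 1 else 0)
      + (if ((Finset.Icc 1 k).filter fun l => k ∉ sortedFam k π (l - 1)).card = 1
          then 1 else 0))
    = (({1, k - 1} : Finset ℕ) ∩ ({π 1, π (k - 1)} : Finset ℕ)).card := by
  rw [Ncompl, Ncompl, N1 hk hπ, Nk hk hπ]
  obtain ⟨q1, q2, q3⟩ := posOf_spec hπ (le_refl 1) (by omega : (1 : ℕ) ≤ k - 1)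
  obtain ⟨r1, r2, r3⟩ := posOf_spec hπ (by omega : 1 ≤ k - 1) (le_refl _)
  have e1 : π 1 = 1 ↔ posOf k π 1 = 1 :=
    pos_eq_iff hπ (by omega) (by omega) (by omega) (by omega)
  have e2 : π (k - 1) = 1 ↔ posOf k π 1 = k - 1 :=
    pos_eq_iff hπ (by omega) (by omega) (by omega) (by omega)
  have e3 : π 1 = k - 1 ↔ posOf k π (k - 1) = 1 :=
    pos_eq_iff hπ (by omega) (by omega) (by omega) (by omega)
  have e4 : π (k - 1) = k - 1 ↔ posOf k π (k - 1) = k - 1 :=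
    pos_eq_iff hπ (by omega) (by omega) (by omega) (by omega)
  have hint : ({1, k - 1} : Finset ℕ) ∩ ({π 1, π (k - 1)} : Finset ℕ)
      = ({1, k - 1} : Finset ℕ).filter fun x => x = π 1 ∨ x = π (k - 1) := by
    ext x
    simp only [Finset.mem_inter, Finset.mem_insert, Finset.mem_singleton, Finset.mem_filter]
  rw [hint, Finset.card_filter,
    show ({1, k - 1} : Finset ℕ) = insert 1 {k - 1} from rfl,
    Finset.sum_insert (by simp only [Finset.mem_singleton]; omega), Finset.sum_singleton]
  split_ifs <;> omega

end Stmt7Aux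

theorem stmt7 (k : ℕ) (hk : 3 ≤ k) (π : ℕ → ℕ) (hπ : OneLine k π)
    (hS : (adjInvF k π).Nonempty) :
    ((Finset.Icc 1 k).filter fun i =>
        ((Finset.Icc 1 k).filter fun l => i ∈ sortedFam k π (l - 1)).card = 1).card
      + ((Finset.Icc 1 k).filter fun i =>
          ((Finset.Icc 1 k).filter fun l => i ∉ sortedFam k π (l - 1)).card = 1).card
      = ear k π := by
  rw [Finset.card_filter, Finset.card_filter, ← Finset.sum_add_distrib,
    Stmt7Aux.sum_split hk]
  beta_reduce
  have hmid : (∑ i ∈ Finset.Icc 2 (k - 1),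
      ((if ((Finset.Icc 1 k).filter fun l => i ∈ sortedFam k π (l - 1)).card = 1
          then 1 else 0)
        + (if ((Finset.Icc 1 k).filter fun l => i ∉ sortedFam k π (l - 1)).card = 1
            then 1 else 0)))
      = ((Finset.Icc 1 (k - 2)).filter fun i =>
          π (i + 1) = π i + 1 ∨ π i = π (i + 1) + 1).card := by
    rw [← Stmt7Aux.card_mid hk hπ, Finset.card_filter]
    apply Finset.sum_congr rfl
    intro i hi
    rw [Finset.mem_Icc] at hi
    rw [Stmt7Aux.Ncompl, Stmt7Aux.Nmid hk hπ hi.1 hi.2]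
    obtain ⟨a1, a2, a3⟩ := Stmt7Aux.posOf_spec hπ (by omega : 1 ≤ i) (by omega)
    obtain ⟨b1, b2, b3⟩ :=
      Stmt7Aux.posOf_spec hπ (by omega : 1 ≤ i - 1) (by omega : i - 1 ≤ k - 1)
    have hne : posOf k π i ≠ posOf k π (i - 1) := by
      intro h
      rw [h, b3] at a3
      omega
    split_ifs <;> omega
  have hb := Stmt7Aux.card_boundary hk hπ
  rw [hmid]
  simp only [ear]
  omega

end
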